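/- Suppose there exists α > 0 such that λ_j ≥ exp(−α·j) for all j ≥ 1. Then EXP-SPT does not hold, for any choice of the weight sequence {γ_j}. -/

import Mathlib

open Filter Real Set Topology
open scoped ENNReal NNReal

noncomputable section

/-- The weighted eigenvalues `λ_{k,j}`: `1` if `j = 1`, and `γ_k · λ_j` if `j ≥ 2`. -/
def lamKJ (γ lam : ℕ → ℝ) (k j : ℕ) : ℝ := if j = 1 then 1 else γ k * lam j

/-- The information complexity `n(ε,d)`: the extended-natural cardinality of the set of
`d`-tuples of positive integers `(n_1,…,n_d)` with `λ_{1,n_1} ⋯ λ_{d,n_d} > ε²`. -/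
def infoN (γ lam : ℕ → ℝ) (ε : ℝ) (d : ℕ) : ℕ∞ :=
  {n : Fin d → ℕ | (∀ i, 1 ≤ n i) ∧ ε ^ 2 < ∏ i, lamKJ γ lam (i.1 + 1) (n i)}.encard

/-- EXP-SPT with a given exponent `p`: there is `C ≥ 0` with
`n(ε,d) ≤ C (1 + log ε⁻¹)^p` for all `d ≥ 1` and `ε ∈ (0,1]`. -/
def ExpSPTwith (γ lam : ℕ → ℝ) (p : ℝ) : Prop :=
  ∃ C : ℝ, 0 ≤ C ∧ ∀ d : ℕ, 1 ≤ d → ∀ ε : ℝ, 0 < ε → ε ≤ 1 →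
    (infoN γ lam ε d : ℝ≥0∞) ≤ ENNReal.ofReal (C * (1 + Real.log ε⁻¹) ^ p)

/-- Exponential strong polynomial tractability. -/
def ExpSPT (γ lam : ℕ → ℝ) : Prop := ∃ p : ℝ, 0 ≤ p ∧ ExpSPTwith γ lam p

/-- Exponential polynomial tractability: there are `C, q, p ≥ 0` with
`n(ε,d) ≤ C d^q (1 + log ε⁻¹)^p` for all `d ≥ 1` and `ε ∈ (0,1]`. -/
def ExpPT (γ lam : ℕ → ℝ) : Prop :=
  ∃ C q p : ℝ, 0 ≤ C ∧ 0 ≤ q ∧ 0 ≤ p ∧ ∀ d : ℕ, 1 ≤ d → ∀ ε : ℝ, 0 < ε → ε ≤ 1 →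
    (infoN γ lam ε d : ℝ≥0∞) ≤ ENNReal.ofReal (C * (d : ℝ) ^ q * (1 + Real.log ε⁻¹) ^ p)

/-- EXP-QPT with a given exponent `t`. -/
def ExpQPTwith (γ lam : ℕ → ℝ) (t : ℝ) : Prop :=
  ∃ C : ℝ, 0 ≤ C ∧ ∀ d : ℕ, 1 ≤ d → ∀ ε : ℝ, 0 < ε → ε ≤ 1 →
    (infoN γ lam ε d : ℝ≥0∞) ≤
      ENNReal.ofReal (C * Real.exp (t * (1 + Real.log d) * (1 + Real.log (1 + Real.log ε⁻¹))))

/-- Exponential quasi-polynomial tractability. -/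
def ExpQPT (γ lam : ℕ → ℝ) : Prop := ∃ t : ℝ, 0 ≤ t ∧ ExpQPTwith γ lam t

/-- Exponential `(s,t)`-weak tractability:
`log max(1, n(ε,d)) / (d^t + (1 + log ε⁻¹)^s) → 0` as `d + ε⁻¹ → ∞`
(in particular `n(ε,d)` is finite for all such `d, ε`). -/
def ExpSTWT (γ lam : ℕ → ℝ) (s t : ℝ) : Prop :=
  ∀ δ : ℝ, 0 < δ → ∃ T : ℝ, ∀ d : ℕ, 1 ≤ d → ∀ ε : ℝ, 0 < ε → ε ≤ 1 →
    T ≤ (d : ℝ) + ε⁻¹ →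
    ∃ N : ℕ, infoN γ lam ε d = (N : ℕ∞) ∧
      Real.log (max 1 (N : ℝ)) / ((d : ℝ) ^ t + (1 + Real.log ε⁻¹) ^ s) < δ

/-- `j(ε) = max { j ≥ 1 : λ_j > ε² }` (a well-defined maximum when `λ_j → 0`). -/
def jEps (lam : ℕ → ℝ) (ε : ℝ) : ℕ := sSup {j : ℕ | 1 ≤ j ∧ ε ^ 2 < lam j}

/-- `d(ε) = max { d ≥ 1 : γ_d > ε² }`, with `d(ε) = 0` if `γ_1 ≤ ε²`
(a well-defined maximum when `γ_d → 0`). -/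
def dEps (γ : ℕ → ℝ) (ε : ℝ) : ℕ := sSup {d : ℕ | 1 ≤ d ∧ ε ^ 2 < γ d}

set_option maxHeartbeats 1600000 in
/-- if λ_j ≥ exp(−α·j) for some α > 0 and all j ≥ 1, then EXP-SPT fails
for every admissible weight sequence γ. -/
theorem stmt17 (lam : ℕ → ℝ)
    (hlam_anti : AntitoneOn lam (Set.Ici 1)) (hlam1 : lam 1 = 1) (hlam2 : 0 < lam 2)
    (hlam_nonneg : ∀ j, 1 ≤ j → 0 ≤ lam j)
    (α : ℝ) (hα : 0 < α) (hge : ∀ j : ℕ, 1 ≤ j → Real.exp (-α * j) ≤ lam j) :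
    ∀ γ : ℕ → ℝ, AntitoneOn γ (Set.Ici 1) → (∀ j, 1 ≤ j → 0 < γ j) →
      (∀ j, 1 ≤ j → γ j ≤ 1) → ¬ ExpSPT γ lam := by
  intro γ hγa hγpos hγ1
  rintro ⟨p, hp, C, hC, hbound⟩
  set d : ℕ := ⌈p⌉₊ + 1 with hd
  clear_value d
  have hd1 : 1 ≤ d := by omega
  have hd1' : (1 : ℝ) ≤ (d : ℝ) := by exact_mod_cast hd1
  have hdp : p + 1 ≤ (d : ℝ) := by
    have := Nat.le_ceil p
    have : p ≤ (⌈p⌉₊ : ℝ) := this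
    rw [hd]; push_cast; linarith
  have hγdpos : 0 < γ d := hγpos d hd1
  have hγd1 : γ d ≤ 1 := hγ1 d hd1
  have hlogγ : Real.log (γ d) ≤ 0 := Real.log_nonpos hγdpos.le hγd1
  set K : ℝ := 1 + d * α - d * Real.log (γ d) with hK
  clear_value K
  have hK1 : (1 : ℝ) ≤ K := by nlinarith
  have hKpos : 0 < K := lt_of_lt_of_le one_pos hK1
  -- main estimate for each m ≥ 1
  have key : ∀ m : ℕ, 1 ≤ m → (m : ℝ) ≤ C * K ^ p := by
    intro m hm
    have hm1 : (1 : ℝ) ≤ (m : ℝ) := by exact_mod_cast hm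
    have hm0 : (0 : ℝ) < (m : ℝ) := lt_of_lt_of_le one_pos hm1
    set c : ℝ := γ d * Real.exp (-α * m) with hc
    clear_value c
    have hexp_pos : 0 < Real.exp (-α * m) := Real.exp_pos _
    have hc0 : 0 < c := by rw [hc]; exact mul_pos hγdpos hexp_pos
    have hexp_lt1 : Real.exp (-α * m) < 1 := by
      rw [Real.exp_lt_one_iff]; nlinarith
    have hc1 : c < 1 := by nlinarith
    set ε : ℝ := c ^ d with hε
    clear_value ε
    have hε0 : 0 < ε := by rw [hε]; exact pow_pos hc0 d
    have hεlt1 : ε < 1 := by rw [hε]; exact pow_lt_one₀ hc0.le hc1 (Nat.one_le_iff_ne_zero.1 hd1)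
    have hεsq : ε ^ 2 < c ^ d := by
      have : ε ^ 2 < ε := by nlinarith
      simpa [hε] using this
    -- the injection from (Fin d → Fin m) into the counted set
    set A : Set (Fin d → ℕ) :=
      {n : Fin d → ℕ | (∀ i, 1 ≤ n i) ∧ ε ^ 2 < ∏ i, lamKJ γ lam (i.1 + 1) (n i)} with hA
    set F : (Fin d → Fin m) → (Fin d → ℕ) := fun f i => (f i).1 + 1 with hF
    have hinj : Function.Injective F := by
      intro f g hfg
      funext i
      have := congrFun hfg i
      simp only [hF] at this
      exact Fin.ext (by omega)
    have hsub : Set.range F ⊆ A := by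
      rintro _ ⟨f, rfl⟩
      constructor
      · intro i; simp [hF]
      · refine lt_of_lt_of_le hεsq ?_
        have hprod : (∏ _i : Fin d, c) ≤ ∏ i, lamKJ γ lam (i.1 + 1) (F f i) := by
          apply Finset.prod_le_prod
          · intro i _; exact hc0.le
          · intro i _
            by_cases h1 : (f i).1 + 1 = 1
            · have : lamKJ γ lam (i.1 + 1) (F f i) = 1 := by
                simp [lamKJ, hF, h1]
              rw [this]
              nlinarith [hexp_lt1, hexp_pos]
            · have hj2 : 2 ≤ (f i).1 + 1 := by omega
              have heq : lamKJ γ lam (i.1 + 1) (F f i) = γ (i.1 + 1) * lam ((f i).1 + 1) := by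
                simp [lamKJ, hF, h1]; intro h; omega
              rw [heq]
              have hγi : γ d ≤ γ (i.1 + 1) := by
                apply hγa (Set.mem_Ici.2 (by omega)) (Set.mem_Ici.2 hd1)
                exact_mod_cast (by omega : i.1 + 1 ≤ d)
              have hlamj : Real.exp (-α * m) ≤ lam ((f i).1 + 1) := by
                refine le_trans ?_ (hge ((f i).1 + 1) (by omega))
                apply Real.exp_le_exp.2
                have : ((f i).1 + 1 : ℝ) ≤ (m : ℝ) := by
                  exact_mod_cast (f i).2
                push_cast
                nlinarith
              have hγi0 : 0 ≤ γ (i.1 + 1) := (hγpos _ (by omega)).le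
              calc c = γ d * Real.exp (-α * m) := hc
                _ ≤ γ (i.1 + 1) * lam ((f i).1 + 1) :=
                  mul_le_mul hγi hlamj hexp_pos.le hγi0
        calc (c : ℝ) ^ d = ∏ _i : Fin d, c := by
              simp [Finset.prod_const]
          _ ≤ _ := hprod
    have hcard : ((m ^ d : ℕ) : ℕ∞) ≤ infoN γ lam ε d := by
      have h1 : (Set.range F).encard ≤ A.encard := Set.encard_le_encard hsub
      have h2 : (Set.range F).encard = ((m ^ d : ℕ) : ℕ∞) := by
        rw [← Set.image_univ, Set.InjOn.encard_image (hinj.injOn), Set.encard_univ]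
        simp [ENat.card_eq_coe_fintype_card]
      rw [infoN, ← hA, ← h2]
      exact h1
    -- use the SPT bound
    have hbd := hbound d hd1 ε hε0 hεlt1.le
    have hcast : (((m ^ d : ℕ) : ℝ≥0∞)) ≤ ENNReal.ofReal (C * (1 + Real.log ε⁻¹) ^ p) := by
      refine le_trans ?_ hbd
      exact_mod_cast (ENat.toENNReal_le.2 hcard)
    clear_value A F
    clear hbd hcard hsub hinj hA hF A F
    have hlogε : Real.log ε⁻¹ = (d : ℝ) * (α * m) - (d : ℝ) * Real.log (γ d) := by
      rw [Real.log_inv, hε, Real.log_pow, hc, Real.log_mul hγdpos.ne' hexp_pos.ne',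
        Real.log_exp]
      ring
    have hlog_pos : 0 ≤ 1 + Real.log ε⁻¹ := by
      rw [hlogε]
      have h1 : 0 ≤ (d : ℝ) * (α * m) := by positivity
      have h2 : 0 ≤ (d : ℝ) * (-Real.log (γ d)) := mul_nonneg (by positivity) (by linarith)
      linarith [h1, h2]
    have hRnn : 0 ≤ C * (1 + Real.log ε⁻¹) ^ p :=
      mul_nonneg hC (Real.rpow_nonneg hlog_pos p)
    have hreal : ((m : ℝ)) ^ d ≤ C * (1 + Real.log ε⁻¹) ^ p := by
      have hmd : (m ^ d : ℕ) ≠ 0 := by positivity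
      have := (ENNReal.natCast_le_ofReal hmd).1 hcast
      exact_mod_cast this
    -- bound 1 + log ε⁻¹ ≤ K * m
    have hKm : 1 + Real.log ε⁻¹ ≤ K * m := by
      rw [hlogε, hK]
      have h2 : 0 ≤ (d : ℝ) * (-Real.log (γ d)) := mul_nonneg (by positivity) (by linarith)
      have h3 : 0 ≤ ((m : ℝ) - 1) * (1 + (d : ℝ) * (-Real.log (γ d))) :=
        mul_nonneg (by linarith) (by linarith)
      linarith [h3]
    have hKm0 : 0 ≤ K * m := by positivity
    have hstep : ((m : ℝ)) ^ d ≤ C * K ^ p * (m : ℝ) ^ p := by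
      calc ((m : ℝ)) ^ d ≤ C * (1 + Real.log ε⁻¹) ^ p := hreal
        _ ≤ C * (K * m) ^ p := by
            exact mul_le_mul_of_nonneg_left
              (Real.rpow_le_rpow hlog_pos hKm hp) hC
        _ = C * K ^ p * (m : ℝ) ^ p := by
            rw [Real.mul_rpow hKpos.le hm0.le]; ring
    -- convert to rpow and divide
    have hsplit : ((m : ℝ)) ^ d = (m : ℝ) ^ p * (m : ℝ) ^ ((d : ℝ) - p) := by
      rw [← Real.rpow_natCast (m : ℝ) d, ← Real.rpow_add hm0]
      congr 1
      ring
    have hmp_pos : 0 < (m : ℝ) ^ p := Real.rpow_pos_of_pos hm0 p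
    have hdiv : (m : ℝ) ^ ((d : ℝ) - p) ≤ C * K ^ p := by
      rw [hsplit] at hstep
      have := (mul_le_mul_iff_of_pos_right hmp_pos).1 (by linarith [hstep] : (m : ℝ) ^ ((d:ℝ)-p) * (m : ℝ) ^ p ≤ C * K ^ p * (m : ℝ) ^ p)
      exact this
    have hmm : (m : ℝ) ≤ (m : ℝ) ^ ((d : ℝ) - p) := by
      have h1 : (m : ℝ) ^ (1 : ℝ) ≤ (m : ℝ) ^ ((d : ℝ) - p) :=
        Real.rpow_le_rpow_of_exponent_le hm1 (by linarith)
      simpa using h1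
    linarith
  -- contradiction: the naturals are unbounded
  obtain ⟨m, hm⟩ := exists_nat_gt (C * K ^ p)
  have := key (m + 1) (Nat.le_add_left 1 m)
  have hmle : (m : ℝ) ≤ (m : ℝ) + 1 := by linarith
  push_cast at this
  linarith
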